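/- Let T be the subgroup of a group G generated by all ℚ-perfect subgroups of G. Then every ℚ-perfect subgroup of the quotient G/T is trivial; equivalently, every group homomorphism from a ℚ-perfect group to G/T is trivial. -/

import Mathlib

open Subgroup

lemma aux_of_surj {A : Type*} [Group A] (x : Abelianization A) :
    ∃ a : A, Abelianization.of a = x := by
  obtain ⟨a, rfl⟩ := Quot.exists_rep x
  exact ⟨a, rfl⟩

lemma aux_map {A B : Type*} [Group A] [Group B] (f : A →* B)
    (hA : Monoid.IsTorsion (Abelianization A)) (a : A) :
    IsOfFinOrder (Abelianization.of (f a)) :=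
  (Abelianization.map f).isOfFinOrder (hA (Abelianization.of a))

lemma aux_of_eq_one {A : Type*} [Group A] {a : A} (h : a ∈ commutator A) :
    Abelianization.of a = 1 :=
  (QuotientGroup.eq_one_iff a).2 h

lemma aux_ext {A B : Type*} [Group A] [Group B] (f : A →* B) (hf : Function.Surjective f)
    (hker : ∀ a ∈ f.ker, IsOfFinOrder (Abelianization.of a))
    (hB : Monoid.IsTorsion (Abelianization B)) : Monoid.IsTorsion (Abelianization A) := by
  intro x
  obtain ⟨a, rfl⟩ := aux_of_surj x
  obtain ⟨n, hn, hn1⟩ := isOfFinOrder_iff_pow_eq_one.1 (hB (Abelianization.of (f a)))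
  have h1 : f (a ^ n) ∈ commutator B := by
    rw [← QuotientGroup.eq_one_iff (G := B) (N := commutator B)]
    rw [map_pow]
    exact hn1
  have hcomm : commutator B = (commutator A).map f := by
    rw [_root_.commutator_def, _root_.commutator_def, Subgroup.map_commutator,
      Subgroup.map_top_of_surjective f hf]
  rw [hcomm] at h1
  obtain ⟨c, hc, hfc⟩ := h1
  have hk : a ^ n * c⁻¹ ∈ f.ker := by
    simp [MonoidHom.mem_ker, hfc]
  obtain ⟨m, hm, hm1⟩ := isOfFinOrder_iff_pow_eq_one.1 (hker _ hk)
  refine isOfFinOrder_iff_pow_eq_one.2 ⟨n * m, Nat.mul_pos hn hm, ?_⟩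
  have key : Abelianization.of (a ^ n * c⁻¹) = Abelianization.of a ^ n := by
    rw [map_mul, map_inv, aux_of_eq_one hc, inv_one, mul_one, map_pow]
  calc Abelianization.of a ^ (n * m) = (Abelianization.of a ^ n) ^ m := by rw [pow_mul]
    _ = 1 := by rw [← key, hm1]

lemma aux_T_torsion {G : Type*} [Group G] :
    Monoid.IsTorsion (Abelianization
      (⨆ (H : Subgroup G) (_ : Monoid.IsTorsion (Abelianization H)), H : Subgroup G)) := by
  set T : Subgroup G := ⨆ (H : Subgroup G) (_ : Monoid.IsTorsion (Abelianization H)), H with hT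
  intro x
  obtain ⟨⟨t, ht⟩, rfl⟩ := aux_of_surj x
  refine Subgroup.iSup_induction'
    (S := fun H : Subgroup G => ⨆ (_ : Monoid.IsTorsion (Abelianization H)), H)
    (C := fun t ht => IsOfFinOrder (Abelianization.of (⟨t, ht⟩ : T))) ?_ ?_ ?_ ht
  · intro H x hx
    have hx' : x ∈ ⨆ (_ : Monoid.IsTorsion (Abelianization H)), H := hx
    by_cases htors : Monoid.IsTorsion (Abelianization H)
    · rw [iSup_pos htors] at hx'
      have hle : H ≤ T := le_iSup₂ (f := fun H _ => H) H htors
      have := aux_map (Subgroup.inclusion hle) htors ⟨x, hx'⟩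
      convert this using 2
      rfl
    · rw [iSup_neg htors] at hx'
      rcases Subgroup.mem_bot.1 hx' with rfl
      have h1 : ∀ h : (1 : G) ∈ T, (⟨1, h⟩ : T) = 1 := fun _ => rfl
      rw [h1, map_one]
      exact IsOfFinOrder.one
  · have h1 : ∀ h : (1 : G) ∈ T, (⟨1, h⟩ : T) = 1 := fun _ => rfl
    rw [h1, map_one]
    exact IsOfFinOrder.one
  · intro x y hx hy hfx hfy
    have h2 : ∀ h : x * y ∈ T, (⟨x * y, h⟩ : T) = ⟨x, hx⟩ * ⟨y, hy⟩ := fun _ => rfl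
    rw [h2, map_mul]
    exact (Commute.all _ _).isOfFinOrder_mul hfx hfy

/-- If `T` is the subgroup generated by all ℚ-perfect subgroups of `G` (which is
normal), then every ℚ-perfect subgroup of `G ⧸ T` is trivial. -/
theorem Qperfect_radical_one_step (G : Type*) [Group G] (T : Subgroup G)
    (hT : T = ⨆ (H : Subgroup G) (_ : Monoid.IsTorsion (Abelianization H)), H)
    [T.Normal] :
    ∀ K : Subgroup (G ⧸ T), Monoid.IsTorsion (Abelianization K) → K = ⊥ := by
  intro K hK
  set π := QuotientGroup.mk' T with hπ
  set P : Subgroup G := K.comap π with hP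
  have hTtors : Monoid.IsTorsion (Abelianization T) := hT ▸ aux_T_torsion
  have hTP : T ≤ P := by
    intro t ht
    have h1 : π t = 1 := (QuotientGroup.eq_one_iff t).2 ht
    exact Subgroup.mem_comap.2 (by rw [h1]; exact one_mem K)
  have hsurj : Function.Surjective (π.subgroupComap K) := by
    rintro ⟨k, hk⟩
    obtain ⟨g, rfl⟩ := QuotientGroup.mk'_surjective T k
    exact ⟨⟨g, hk⟩, rfl⟩
  have hker : ∀ p ∈ (π.subgroupComap K).ker, IsOfFinOrder (Abelianization.of p) := by
    rintro ⟨p, hp⟩ hpk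
    have hpT : p ∈ T := by
      have : π p = 1 := congrArg Subtype.val hpk
      exact (QuotientGroup.eq_one_iff p).1 this
    have := aux_map (Subgroup.inclusion hTP) hTtors ⟨p, hpT⟩
    convert this using 2
    rfl
  have hPtors : Monoid.IsTorsion (Abelianization P) :=
    aux_ext (π.subgroupComap K) hsurj hker hK
  have hPT : P ≤ T := hT ▸ le_iSup₂ (f := fun H _ => H) P hPtors
  have : K = P.map π := (Subgroup.map_comap_eq_self_of_surjective
    (QuotientGroup.mk'_surjective T) K).symm
  rw [this, eq_bot_iff]
  rintro x ⟨p, hpP, rfl⟩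
  rw [Subgroup.mem_bot]
  exact (QuotientGroup.eq_one_iff p).2 (hPT hpP)
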